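/- If G is dicotic and the game {(n−1)·↓ + * | 0} is formed for odd n ≥ 1, then {(n−1)·↓ + * | 0} is equivalent to n·↓; and for even n ≥ 2, {(n−1)·↓ | 0} is equivalent to n·↓ + *. -/

import Mathlib

universe u

noncomputable section

namespace SetTheory

/-- Pre-games, as in the older Mathlib `SetTheory.PGame` (removed from current Mathlib). -/
inductive PGame : Type (u + 1)
  | mk : ∀ α β : Type u, (α → PGame) → (β → PGame) → PGame

namespace PGame

def LeftMoves : PGame → Type u
  | mk l _ _ _ => l

def RightMoves : PGame → Type u
  | mk _ r _ _ => r

def moveLeft : ∀ g : PGame, LeftMoves g → PGame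
  | mk _l _ L _ => L

def moveRight : ∀ g : PGame, RightMoves g → PGame
  | mk _ _r _ R => R

instance : Zero PGame := ⟨⟨PEmpty, PEmpty, PEmpty.elim, PEmpty.elim⟩⟩

instance : One PGame := ⟨⟨PUnit, PEmpty, fun _ => 0, PEmpty.elim⟩⟩

def star : PGame.{u} := ⟨PUnit, PUnit, fun _ => 0, fun _ => 0⟩

def ofLists (L R : List PGame.{u}) : PGame.{u} :=
  mk (ULift (Fin L.length)) (ULift (Fin R.length)) (fun i => L.get i.down) fun j => R.get j.down

def neg : PGame → PGame
  | ⟨l, r, L, R⟩ => ⟨r, l, fun i => neg (R i), fun i => neg (L i)⟩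

instance : Neg PGame := ⟨neg⟩

def add (x y : PGame.{u}) : PGame.{u} := by
  induction x generalizing y with | mk xl xr _ _ IHxl IHxr => ?_
  induction y with | mk yl yr yL yR IHyl IHyr => ?_
  have y := mk yl yr yL yR
  refine ⟨xl ⊕ yl, xr ⊕ yr, Sum.rec ?_ ?_, Sum.rec ?_ ?_⟩
  · exact fun i => IHxl i y
  · exact IHyl
  · exact fun i => IHxr i y
  · exact IHyr

instance : Add PGame.{u} := ⟨add⟩

/-- The pair (x ≤ y, x ⧏ y), defined by simultaneous recursion as in the older Mathlib. -/
def leLF (x : PGame.{u}) : PGame.{u} → Prop × Prop := by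
  induction x with | mk xl xr xL xR IHxl IHxr => ?_
  intro y
  induction y with | mk yl yr yL yR IHyl IHyr => ?_
  exact ⟨(∀ i, (IHxl i ⟨yl, yr, yL, yR⟩).2) ∧ ∀ j, (IHyr j).2,
    (∃ i, (IHyl i).1) ∨ ∃ j, (IHxr j ⟨yl, yr, yL, yR⟩).1⟩

instance : LE PGame := ⟨fun x y => (leLF x y).1⟩

instance : LT PGame := ⟨fun x y => x ≤ y ∧ ¬y ≤ x⟩

def Equiv (x y : PGame) : Prop := x ≤ y ∧ y ≤ x

instance : HasEquiv PGame := ⟨Equiv⟩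

inductive IsOption : PGame → PGame → Prop
  | moveLeft {x : PGame} (i : x.LeftMoves) : IsOption (x.moveLeft i) x
  | moveRight {x : PGame} (i : x.RightMoves) : IsOption (x.moveRight i) x

theorem wf_isOption : WellFounded IsOption :=
  ⟨fun x => by
    induction x with
    | mk l r L R IHl IHr =>
      refine Acc.intro _ fun y h => ?_
      cases h with
      | moveLeft i => exact IHl i
      | moveRight j => exact IHr j⟩

instance : WellFoundedRelation PGame := ⟨IsOption, wf_isOption⟩

end PGame

end SetTheory
open SetTheory PGame
open scoped PGame

/-- The game up, ↑ = {0 | *}. -/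
def upG : PGame := ofLists [0] [star]

/-- The game down, ↓ = {* | 0}. -/
def downG : PGame := ofLists [star] [0]

/-- `copies n G` is the disjunctive sum of `n` copies of `G`. -/
def copies : ℕ → PGame → PGame
  | 0, _ => 0
  | n + 1, G => copies n G + G

/-- A game is dicotic (all-small) if either it has no options for either player, or
both players have at least one option and every option is dicotic. -/
def Dicotic (G : PGame) : Prop :=
  (IsEmpty G.LeftMoves ∧ IsEmpty G.RightMoves ∨
    Nonempty G.LeftMoves ∧ Nonempty G.RightMoves) ∧
    (∀ i, Dicotic (G.moveLeft i)) ∧ ∀ j, Dicotic (G.moveRight j)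
termination_by G
decreasing_by
  all_goals first
    | exact PGame.IsOption.moveLeft _
    | exact PGame.IsOption.moveRight _

/-- The dicotic transformation δ: every empty option set is replaced by the single option 0. -/
def delta : PGame → PGame
  | PGame.mk l r L R =>
    PGame.mk (l ⊕ PLift (IsEmpty l)) (r ⊕ PLift (IsEmpty r))
      (Sum.rec (fun i => delta (L i)) fun _ => 0)
      (Sum.rec (fun j => delta (R j)) fun _ => 0)

/-- A game is infinitesimal if every positive multiple lies strictly between -1 and 1. -/
def Infinitesimal (G : PGame) : Prop :=
  ∀ n : ℕ, 0 < n → copies n G < 1 ∧ -1 < copies n G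


namespace SetTheory.PGame

instance : IsEmpty (LeftMoves (0:PGame.{u})) := inferInstanceAs (IsEmpty PEmpty)
instance : IsEmpty (RightMoves (0:PGame.{u})) := inferInstanceAs (IsEmpty PEmpty)

theorem le_def' {x y : PGame.{u}} :
    x ≤ y ↔ (∀ i, (leLF (x.moveLeft i) y).2) ∧ ∀ j, (leLF x (y.moveRight j)).2 := by
  cases x; cases y; exact Iff.rfl

theorem lf_def' {x y : PGame.{u}} :
    (leLF x y).2 ↔ (∃ i, x ≤ y.moveLeft i) ∨ ∃ j, x.moveRight j ≤ y := by
  cases x; cases y; exact Iff.rfl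

theorem lf'_iff_not_le (x y : PGame.{u}) :
    ((leLF x y).2 ↔ ¬ y ≤ x) ∧ ((leLF y x).2 ↔ ¬ x ≤ y) := by
  induction x generalizing y with
  | mk xl xr xL xR IHxl IHxr =>
  induction y with
  | mk yl yr yL yR IHyl IHyr =>
  constructor
  · rw [lf_def', le_def']
    constructor
    · rintro (⟨i, h⟩ | ⟨j, h⟩) ⟨h1, h2⟩
      · exact ((IHyl i).2.1 (h1 i)) h
      · exact ((IHxr j _).2.1 (h2 j)) h
    · intro h
      by_contra h'
      exact h ⟨fun i => (IHyl i).2.2 (fun hh => h' (Or.inl ⟨i, hh⟩)),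
        fun j => (IHxr j _).2.2 (fun hh => h' (Or.inr ⟨j, hh⟩))⟩
  · rw [lf_def', le_def']
    constructor
    · rintro (⟨i, h⟩ | ⟨j, h⟩) ⟨h1, h2⟩
      · exact ((IHxl i _).1.1 (h1 i)) h
      · exact ((IHyr j).1.1 (h2 j)) h
    · intro h
      by_contra h'
      exact h ⟨fun i => (IHxl i _).1.2 (fun hh => h' (Or.inl ⟨i, hh⟩)),
        fun j => (IHyr j).1.2 (fun hh => h' (Or.inr ⟨j, hh⟩))⟩

def LF (x y : PGame.{u}) : Prop := ¬ y ≤ x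

infixl:50 " ⧏ " => LF

theorem lf_iff' {x y : PGame.{u}} : (leLF x y).2 ↔ x ⧏ y := (lf'_iff_not_le x y).1

theorem le_iff_forall_lf {x y : PGame.{u}} :
    x ≤ y ↔ (∀ i, x.moveLeft i ⧏ y) ∧ ∀ j, x ⧏ y.moveRight j := by
  rw [le_def']; simp only [lf_iff']

theorem lf_iff_exists_le {x y : PGame.{u}} :
    x ⧏ y ↔ (∃ i, x ≤ y.moveLeft i) ∨ ∃ j, x.moveRight j ≤ y := lf_iff'.symm.trans lf_def'

theorem lf_of_le_moveLeft {x y : PGame.{u}} {i : y.LeftMoves} (h : x ≤ y.moveLeft i) : x ⧏ y :=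
  fun hyx => (le_iff_forall_lf.1 hyx).1 i h

theorem lf_of_moveRight_le {x y : PGame.{u}} {j : x.RightMoves} (h : x.moveRight j ≤ y) : x ⧏ y :=
  fun hyx => (le_iff_forall_lf.1 hyx).2 j h

theorem le_refl_aux (x : PGame.{u}) : x ≤ x := by
  induction x with
  | mk xl xr xL xR IHl IHr =>
  rw [le_iff_forall_lf]
  exact ⟨fun i => lf_of_le_moveLeft (i := i) (IHl i), fun j => lf_of_moveRight_le (j := j) (IHr j)⟩

theorem le_trans_aux {x y z : PGame.{u}}
    (h₁ : ∀ {i}, y ≤ z → z ≤ x.moveLeft i → y ≤ x.moveLeft i)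
    (h₂ : ∀ {j}, z.moveRight j ≤ x → x ≤ y → z.moveRight j ≤ y) (hxy : x ≤ y) (hyz : y ≤ z) :
    x ≤ z := by
  rw [le_iff_forall_lf]
  refine ⟨fun i h => (le_iff_forall_lf.1 hxy).1 i (h₁ hyz h),
    fun j h => (le_iff_forall_lf.1 hyz).2 j (h₂ h hxy)⟩

theorem le_trans3 (x y z : PGame.{u}) :
    (x ≤ y → y ≤ z → x ≤ z) ∧ (y ≤ z → z ≤ x → y ≤ x) ∧ (z ≤ x → x ≤ y → z ≤ y) := by
  induction x generalizing y z with
  | mk xl xr xL xR IHxl IHxr =>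
  induction y generalizing z with
  | mk yl yr yL yR IHyl IHyr =>
  induction z with
  | mk zl zr zL zR IHzl IHzr =>
  exact ⟨le_trans_aux (fun {i} => (IHxl i _ _).2.1) fun {j} => (IHzr j).2.2,
    le_trans_aux (fun {i} => (IHyl i _).2.2) fun {j} => (IHxr j _ _).1,
    le_trans_aux (fun {i} => (IHzl i).1) fun {j} => (IHyr j _).2.1⟩

instance : Preorder PGame.{u} where
  le x y := x ≤ y
  lt x y := x < y
  le_refl := le_refl_aux
  le_trans x y z := (le_trans3 x y z).1
  lt_iff_le_not_ge _ _ := Iff.rfl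

@[refl] theorem equiv_refl (x : PGame.{u}) : x ≈ x := ⟨le_rfl, le_rfl⟩

theorem Equiv.symm {x y : PGame.{u}} (h : x ≈ y) : y ≈ x := ⟨h.2, h.1⟩

theorem Equiv.trans {x y z : PGame.{u}} (h1 : x ≈ y) (h2 : y ≈ z) : x ≈ z :=
  ⟨le_trans h1.1 h2.1, le_trans h2.2 h1.2⟩

theorem le_congr_left {x₁ x₂ y : PGame.{u}} (hx : x₁ ≈ x₂) : x₁ ≤ y ↔ x₂ ≤ y :=
  ⟨fun h => le_trans hx.2 h, fun h => le_trans hx.1 h⟩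

theorem le_congr_right {x y₁ y₂ : PGame.{u}} (hy : y₁ ≈ y₂) : x ≤ y₁ ↔ x ≤ y₂ :=
  ⟨fun h => le_trans h hy.1, fun h => le_trans h hy.2⟩

theorem lf_congr_right {x y₁ y₂ : PGame.{u}} (hy : y₁ ≈ y₂) : x ⧏ y₁ ↔ x ⧏ y₂ :=
  not_congr (le_congr_left hy)

instance : Inhabited star.{u}.LeftMoves := ⟨PUnit.unit⟩
instance : Inhabited star.{u}.RightMoves := ⟨PUnit.unit⟩

@[simp] theorem star_moveLeft (x) : star.{u}.moveLeft x = 0 := rfl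
@[simp] theorem star_moveRight (x) : star.{u}.moveRight x = 0 := rfl

theorem star_fuzzy_zero : star.{u} ⧏ 0 ∧ (0 : PGame.{u}) ⧏ star :=
  ⟨lf_of_moveRight_le (j := PUnit.unit) (le_refl_aux 0),
    lf_of_le_moveLeft (i := PUnit.unit) (le_refl_aux 0)⟩

theorem neg_zero' : -(0 : PGame.{u}) = 0 := by
  show neg (mk PEmpty PEmpty PEmpty.elim PEmpty.elim) = mk PEmpty PEmpty PEmpty.elim PEmpty.elim
  rw [neg]
  congr 1 <;> funext i <;> exact i.elim

theorem neg_star : -star.{u} = star := by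
  show mk PUnit PUnit (fun _ => -0) (fun _ => -0) = star
  rw [neg_zero']
  rfl

def toOfListsLeftMoves {L R : List PGame.{u}} : Fin L.length ≃ (ofLists L R).LeftMoves :=
  Equiv.ulift.symm

def toOfListsRightMoves {L R : List PGame.{u}} : Fin R.length ≃ (ofLists L R).RightMoves :=
  Equiv.ulift.symm

theorem ofLists_moveLeft' {L R : List PGame.{u}} (i : (ofLists L R).LeftMoves) :
    (ofLists L R).moveLeft i = L.get (toOfListsLeftMoves.symm i) := rfl

theorem ofLists_moveRight' {L R : List PGame.{u}} (j : (ofLists L R).RightMoves) :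
    (ofLists L R).moveRight j = R.get (toOfListsRightMoves.symm j) := rfl

theorem leftMoves_add (x y : PGame.{u}) : (x + y).LeftMoves = (x.LeftMoves ⊕ y.LeftMoves) := by
  cases x; cases y; rfl

theorem rightMoves_add (x y : PGame.{u}) :
    (x + y).RightMoves = (x.RightMoves ⊕ y.RightMoves) := by
  cases x; cases y; rfl

def toLeftMovesAdd {x y : PGame.{u}} : x.LeftMoves ⊕ y.LeftMoves ≃ (x + y).LeftMoves :=
  _root_.Equiv.cast (leftMoves_add x y).symm

def toRightMovesAdd {x y : PGame.{u}} : x.RightMoves ⊕ y.RightMoves ≃ (x + y).RightMoves :=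
  _root_.Equiv.cast (rightMoves_add x y).symm

@[simp] theorem add_moveLeft_inl {x y : PGame.{u}} (i) :
    (x + y).moveLeft (toLeftMovesAdd (Sum.inl i)) = x.moveLeft i + y := by
  cases x; cases y; rfl

@[simp] theorem add_moveLeft_inr {x y : PGame.{u}} (i) :
    (x + y).moveLeft (toLeftMovesAdd (Sum.inr i)) = x + y.moveLeft i := by
  cases x; cases y; rfl

@[simp] theorem add_moveRight_inl {x y : PGame.{u}} (i) :
    (x + y).moveRight (toRightMovesAdd (Sum.inl i)) = x.moveRight i + y := by
  cases x; cases y; rfl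

@[simp] theorem add_moveRight_inr {x y : PGame.{u}} (i) :
    (x + y).moveRight (toRightMovesAdd (Sum.inr i)) = x + y.moveRight i := by
  cases x; cases y; rfl

theorem leftMoves_add_cases {x y : PGame.{u}} (k) {P : (x + y).LeftMoves → Prop}
    (hl : ∀ i, P (toLeftMovesAdd (Sum.inl i))) (hr : ∀ i, P (toLeftMovesAdd (Sum.inr i))) :
    P k := by
  obtain ⟨k, rfl⟩ := toLeftMovesAdd.surjective k
  cases k with
  | inl i => exact hl i
  | inr i => exact hr i

theorem rightMoves_add_cases {x y : PGame.{u}} (k) {P : (x + y).RightMoves → Prop}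
    (hl : ∀ i, P (toRightMovesAdd (Sum.inl i))) (hr : ∀ i, P (toRightMovesAdd (Sum.inr i))) :
    P k := by
  obtain ⟨k, rfl⟩ := toRightMovesAdd.surjective k
  cases k with
  | inl i => exact hl i
  | inr i => exact hr i

theorem add_mono_aux (x y z : PGame.{u}) :
    (x ≤ y → x + z ≤ y + z) ∧ (x ⧏ y → x + z ⧏ y + z) := by
  induction x generalizing y z with
  | mk xl xr xL xR IHxl IHxr =>
  induction y generalizing z with
  | mk yl yr yL yR IHyl IHyr =>
  induction z with
  | mk zl zr zL zR IHzl IHzr =>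
  constructor
  · intro h
    have h' := le_iff_forall_lf.1 h
    rw [le_iff_forall_lf]
    refine ⟨fun i => ?_, fun j => ?_⟩
    · obtain ⟨k, rfl⟩ := toLeftMovesAdd.surjective i
      rcases k with i | k
      · rw [add_moveLeft_inl]
        exact (IHxl i _ _).2 (h'.1 i)
      · rw [add_moveLeft_inr]
        refine lf_of_le_moveLeft (i := toLeftMovesAdd (Sum.inr k)) ?_
        rw [add_moveLeft_inr]
        exact (IHzl k).1 h
    · obtain ⟨k, rfl⟩ := toRightMovesAdd.surjective j
      rcases k with j | k
      · rw [add_moveRight_inl]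
        exact (IHyr j _).2 (h'.2 j)
      · rw [add_moveRight_inr]
        refine lf_of_moveRight_le (j := toRightMovesAdd (Sum.inr k)) ?_
        rw [add_moveRight_inr]
        exact (IHzr k).1 h
  · intro h
    rcases lf_iff_exists_le.1 h with ⟨i, hi⟩ | ⟨j, hj⟩
    · refine lf_of_le_moveLeft (i := toLeftMovesAdd (Sum.inl i)) ?_
      rw [add_moveLeft_inl]
      exact (IHyl i _).1 hi
    · refine lf_of_moveRight_le (j := toRightMovesAdd (Sum.inl j)) ?_
      rw [add_moveRight_inl]
      exact (IHxr j _ _).1 hj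

inductive RelabelR : PGame.{u} → PGame.{u} → Prop
  | mk {x y : PGame.{u}} (L : x.LeftMoves ≃ y.LeftMoves) (R : x.RightMoves ≃ y.RightMoves)
      (hL : ∀ i, RelabelR (x.moveLeft i) (y.moveLeft (L i)))
      (hR : ∀ j, RelabelR (x.moveRight j) (y.moveRight (R j))) : RelabelR x y

theorem RelabelR.equiv {x y : PGame.{u}} (h : RelabelR x y) : x ≈ y := by
  induction h with
  | mk L R hL hR ihL ihR =>
    constructor
    · rw [le_iff_forall_lf]
      refine ⟨fun i => lf_of_le_moveLeft (i := L i) (ihL i).1, fun j => ?_⟩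
      obtain ⟨j, rfl⟩ := R.surjective j
      exact lf_of_moveRight_le (j := j) (ihR j).1
    · rw [le_iff_forall_lf]
      refine ⟨fun i => ?_, fun j => lf_of_moveRight_le (j := R j) (ihR j).2⟩
      obtain ⟨i, rfl⟩ := L.surjective i
      exact lf_of_le_moveLeft (i := i) (ihL i).2

theorem add_comm_rel (x y : PGame.{u}) : RelabelR (x + y) (y + x) := by
  induction x generalizing y with
  | mk xl xr xL xR IHxl IHxr =>
  induction y with
  | mk yl yr yL yR IHyl IHyr =>
  refine RelabelR.mk (_root_.Equiv.sumComm _ _) (_root_.Equiv.sumComm _ _) ?_ ?_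
  · rintro (i | i)
    · exact IHxl i _
    · exact IHyl i
  · rintro (j | j)
    · exact IHxr j _
    · exact IHyr j

theorem add_assoc_rel (x y z : PGame.{u}) : RelabelR (x + y + z) (x + (y + z)) := by
  induction x generalizing y z with
  | mk xl xr xL xR IHxl IHxr =>
  induction y generalizing z with
  | mk yl yr yL yR IHyl IHyr =>
  induction z with
  | mk zl zr zL zR IHzl IHzr =>
  refine RelabelR.mk (_root_.Equiv.sumAssoc _ _ _) (_root_.Equiv.sumAssoc _ _ _) ?_ ?_
  · rintro ((i | i) | i)
    · exact IHxl i _ _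
    · exact IHyl i _
    · exact IHzl i
  · rintro ((j | j) | j)
    · exact IHxr j _ _
    · exact IHyr j _
    · exact IHzr j

theorem add_zero_rel (x : PGame.{u}) : RelabelR (x + 0) x := by
  induction x with
  | mk xl xr xL xR IHl IHr =>
  refine RelabelR.mk (_root_.Equiv.sumEmpty _ PEmpty) (_root_.Equiv.sumEmpty _ PEmpty) ?_ ?_
  · rintro (i | i)
    · exact IHl i
    · exact i.elim
  · rintro (j | j)
    · exact IHr j
    · exact j.elim

theorem add_comm_equiv {x y : PGame.{u}} : x + y ≈ y + x := (add_comm_rel x y).equiv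

theorem add_assoc_equiv {x y z : PGame.{u}} : x + y + z ≈ x + (y + z) := (add_assoc_rel x y z).equiv

theorem add_zero_equiv (x : PGame.{u}) : x + 0 ≈ x := (add_zero_rel x).equiv

theorem zero_add_equiv (x : PGame.{u}) : 0 + x ≈ x := add_comm_equiv.trans (add_zero_equiv x)

theorem add_le_add_right {x y : PGame.{u}} (h : x ≤ y) (z : PGame.{u}) : x + z ≤ y + z :=
  (add_mono_aux x y z).1 h

theorem add_le_add_left {x y : PGame.{u}} (h : x ≤ y) (z : PGame.{u}) : z + x ≤ z + y :=
  le_trans add_comm_equiv.1 (le_trans (add_le_add_right h z) add_comm_equiv.1)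

theorem add_congr_left {x y z : PGame.{u}} (h : x ≈ y) : x + z ≈ y + z :=
  ⟨add_le_add_right h.1 z, add_le_add_right h.2 z⟩

theorem add_congr_right {x y z : PGame.{u}} (h : y ≈ z) : x + y ≈ x + z :=
  ⟨add_le_add_left h.1 x, add_le_add_left h.2 x⟩

def toLeftMovesNeg {x : PGame.{u}} : x.RightMoves ≃ (-x).LeftMoves := by
  cases x; exact _root_.Equiv.refl _

def toRightMovesNeg {x : PGame.{u}} : x.LeftMoves ≃ (-x).RightMoves := by
  cases x; exact _root_.Equiv.refl _

theorem neg_moveLeft' {x : PGame.{u}} (i) : (-x).moveLeft (toLeftMovesNeg i) = -(x.moveRight i) := by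
  cases x; rfl

theorem neg_moveRight' {x : PGame.{u}} (i) : (-x).moveRight (toRightMovesNeg i) = -(x.moveLeft i) := by
  cases x; rfl

theorem add_neg_cancel_le_zero (x : PGame.{u}) : x + -x ≤ 0 := by
  induction x with
  | mk xl xr xL xR IHl IHr =>
  rw [le_iff_forall_lf]
  refine ⟨fun i => ?_, fun j => isEmptyElim j⟩
  obtain ⟨k, rfl⟩ := toLeftMovesAdd.surjective i
  rcases k with i | j
  · rw [add_moveLeft_inl]
    refine lf_of_moveRight_le (j := toRightMovesAdd (Sum.inr (toRightMovesNeg i))) ?_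
    rw [add_moveRight_inr, neg_moveRight']
    exact IHl i
  · obtain ⟨j, rfl⟩ := toLeftMovesNeg.surjective j
    rw [add_moveLeft_inr, neg_moveLeft']
    refine lf_of_moveRight_le (j := toRightMovesAdd (Sum.inl j)) ?_
    rw [add_moveRight_inl]
    exact IHr j

theorem zero_le_add_neg_cancel (x : PGame.{u}) : 0 ≤ x + -x := by
  induction x with
  | mk xl xr xL xR IHl IHr =>
  rw [le_iff_forall_lf]
  refine ⟨fun i => isEmptyElim i, fun j => ?_⟩
  obtain ⟨k, rfl⟩ := toRightMovesAdd.surjective j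
  rcases k with j | i
  · rw [add_moveRight_inl]
    refine lf_of_le_moveLeft (i := toLeftMovesAdd (Sum.inr (toLeftMovesNeg j))) ?_
    rw [add_moveLeft_inr, neg_moveLeft']
    exact IHr j
  · obtain ⟨i, rfl⟩ := toRightMovesNeg.surjective i
    rw [add_moveRight_inr, neg_moveRight']
    refine lf_of_le_moveLeft (i := toLeftMovesAdd (Sum.inl i)) ?_
    rw [add_moveLeft_inl]
    exact IHl i

end SetTheory.PGame

lemma ofLists_sing_moveLeft (x y : PGame) (i) : (ofLists [x] [y]).moveLeft i = x := by
  rw [ofLists_moveLeft']; simp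

lemma ofLists_sing_moveRight (x y : PGame) (j) : (ofLists [x] [y]).moveRight j = y := by
  rw [ofLists_moveRight']; simp

def sIdxL (x y : PGame) : (ofLists [x] [y]).LeftMoves := toOfListsLeftMoves ⟨0, Nat.one_pos⟩
def sIdxR (x y : PGame) : (ofLists [x] [y]).RightMoves := toOfListsRightMoves ⟨0, Nat.one_pos⟩

def dlIdx : downG.LeftMoves := sIdxL star 0
def drIdx : downG.RightMoves := sIdxR star 0

lemma downG_moveLeft (i) : downG.moveLeft i = star := ofLists_sing_moveLeft _ _ i
lemma downG_moveRight (j) : downG.moveRight j = 0 := ofLists_sing_moveRight _ _ j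

lemma D_succ (m : ℕ) : copies (m+1) downG = copies m downG + downG := rfl

lemma starStar : star + star ≈ (0:PGame) := by
  constructor
  · have := add_neg_cancel_le_zero star; rwa [neg_star] at this
  · have := zero_le_add_neg_cancel star; rwa [neg_star] at this

lemma down_le_zero : downG ≤ 0 := by
  rw [le_iff_forall_lf]
  refine ⟨fun i => ?_, fun j => isEmptyElim j⟩
  rw [downG_moveLeft]
  exact star_fuzzy_zero.1

lemma D_succ_le (m : ℕ) : copies (m+1) downG ≤ copies m downG := by
  rw [D_succ]
  exact (PGame.add_le_add_left down_le_zero _).trans (add_zero_equiv _).1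

lemma D_mono {m k : ℕ} (h : m ≤ k) : copies k downG ≤ copies m downG := by
  induction h with
  | refl => exact le_rfl
  | step h ih => exact (D_succ_le _).trans ih

lemma D_neg (m : ℕ) : copies m downG ≤ 0 := D_mono (Nat.zero_le m)

def elim0R {C : Sort*} (j : (copies 0 downG).RightMoves) : C :=
  (((inferInstance : IsEmpty (RightMoves (0:PGame)))).false j).elim

def elim0L {C : Sort*} (i : (copies 0 downG).LeftMoves) : C :=
  (((inferInstance : IsEmpty (LeftMoves (0:PGame)))).false i).elim

lemma D_moveRight : ∀ m (j : (copies (m+1) downG).RightMoves),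
    (copies (m+1) downG).moveRight j ≈ copies m downG := by
  intro m
  induction m with
  | zero =>
    show ∀ j : (copies 0 downG + downG).RightMoves,
      (copies 0 downG + downG).moveRight j ≈ copies 0 downG
    intro j
    refine rightMoves_add_cases (P := fun j => (copies 0 downG + downG).moveRight j ≈ copies 0 downG)
      j (fun j' => elim0R j') (fun j' => ?_)
    rw [add_moveRight_inr, downG_moveRight]
    exact add_zero_equiv _
  | succ m ih =>
    show ∀ j : (copies (m+1) downG + downG).RightMoves,
      (copies (m+1) downG + downG).moveRight j ≈ copies (m+1) downG
    intro j
    refine rightMoves_add_cases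
      (P := fun j => (copies (m+1) downG + downG).moveRight j ≈ copies (m+1) downG)
      j (fun j' => ?_) (fun j' => ?_)
    · rw [add_moveRight_inl]
      exact add_congr_left (ih j')
    · rw [add_moveRight_inr, downG_moveRight]
      exact add_zero_equiv _

lemma D_moveLeft : ∀ m (i : (copies (m+1) downG).LeftMoves),
    (copies (m+1) downG).moveLeft i ≈ copies m downG + star := by
  intro m
  induction m with
  | zero =>
    show ∀ i : (copies 0 downG + downG).LeftMoves,
      (copies 0 downG + downG).moveLeft i ≈ copies 0 downG + PGame.star
    intro i
    refine leftMoves_add_cases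
      (P := fun i => (copies 0 downG + downG).moveLeft i ≈ copies 0 downG + PGame.star)
      i (fun i' => elim0L i') (fun i' => ?_)
    rw [add_moveLeft_inr, downG_moveLeft]
  | succ m ih =>
    show ∀ i : (copies (m+1) downG + downG).LeftMoves,
      (copies (m+1) downG + downG).moveLeft i ≈ copies (m+1) downG + PGame.star
    intro i
    refine leftMoves_add_cases
      (P := fun i => (copies (m+1) downG + downG).moveLeft i ≈ copies (m+1) downG + PGame.star)
      i (fun i' => ?_) (fun i' => ?_)
    · rw [add_moveLeft_inl]
      exact PGame.Equiv.trans (add_congr_left (ih i'))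
        (PGame.Equiv.trans add_assoc_equiv
          (PGame.Equiv.trans (add_congr_right add_comm_equiv) (PGame.Equiv.symm add_assoc_equiv)))
    · rw [add_moveLeft_inr, downG_moveLeft]

def dRIdx (m : ℕ) : (copies (m+1) downG).RightMoves :=
  show (copies m downG + downG).RightMoves from toRightMovesAdd (Sum.inr drIdx)

def dLIdx (m : ℕ) : (copies (m+1) downG).LeftMoves :=
  show (copies m downG + downG).LeftMoves from toLeftMovesAdd (Sum.inr dlIdx)

lemma two_down_le_star : downG + downG ≤ star := by
  rw [le_iff_forall_lf]
  constructor
  · intro i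
    refine leftMoves_add_cases (P := fun i => (downG + downG).moveLeft i ⧏ star) i
      (fun i' => ?_) (fun i' => ?_)
    · rw [add_moveLeft_inl, downG_moveLeft]
      refine lf_of_moveRight_le (j := toRightMovesAdd (Sum.inr drIdx)) ?_
      rw [add_moveRight_inr, downG_moveRight]
      exact (add_zero_equiv star).1
    · rw [add_moveLeft_inr, downG_moveLeft]
      refine lf_of_moveRight_le (j := toRightMovesAdd (Sum.inl drIdx)) ?_
      rw [add_moveRight_inl, downG_moveRight]
      exact (zero_add_equiv star).1
  · intro j
    rw [star_moveRight]
    refine lf_of_moveRight_le (j := toRightMovesAdd (Sum.inr drIdx)) ?_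
    rw [add_moveRight_inr, downG_moveRight]
    exact (add_zero_equiv downG).1.trans down_le_zero

lemma VU : ∀ k m : ℕ,
    (k ≤ m + 1 → ofLists [copies m downG + star] [0] ≤ (copies k downG : PGame.{u})) ∧
    (k + 1 ≤ m → ofLists [copies m downG + star] [0] ≤ (copies k downG : PGame.{u}) + star) ∧
    (k + 1 ≤ m → ofLists [copies m downG] [0] ≤ (copies k downG : PGame.{u})) ∧
    (1 ≤ m → k ≤ m + 1 → ofLists [copies m downG] [0] ≤ (copies k downG : PGame.{u}) + star) := by
  intro k
  induction k using Nat.strong_induction_on with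
  | _ k IH =>
  intro m
  refine ⟨?_, ?_, ?_, ?_⟩
  -- Part 1 : V-Ge
  · intro hk
    rw [le_iff_forall_lf]
    constructor
    · intro i
      rw [ofLists_sing_moveLeft]
      cases k with
      | zero =>
        refine lf_of_moveRight_le (j := toRightMovesAdd (Sum.inr default)) ?_
        rw [add_moveRight_inr, star_moveRight]
        exact (add_zero_equiv _).1.trans (D_neg m)
      | succ k' =>
        show copies m downG + star ⧏ copies k' downG + downG
        refine lf_of_le_moveLeft (i := toLeftMovesAdd (Sum.inr dlIdx)) ?_
        rw [add_moveLeft_inr, downG_moveLeft]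
        exact PGame.add_le_add_right (D_mono (by omega)) star
    · intro j
      cases k with
      | zero => exact elim0R j
      | succ k' =>
        refine (lf_congr_right (D_moveRight k' j)).mpr ?_
        cases k' with
        | zero =>
          refine lf_of_moveRight_le (j := sIdxR _ _) ?_
          rw [ofLists_sing_moveRight]
          exact le_rfl
        | succ k'' =>
          show _ ⧏ copies k'' downG + downG
          refine lf_of_le_moveLeft (i := toLeftMovesAdd (Sum.inr dlIdx)) ?_
          rw [add_moveLeft_inr, downG_moveLeft]
          exact ((IH k'' (by omega) m).2.1) (by omega)
  -- Part 2 : U-Ge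
  · intro hk
    obtain ⟨m', rfl⟩ : ∃ m', m = m'+1 := ⟨m-1, by omega⟩
    rw [le_iff_forall_lf]
    constructor
    · intro i
      rw [ofLists_sing_moveLeft]
      refine lf_of_moveRight_le (j := toRightMovesAdd (Sum.inl (dRIdx m'))) ?_
      rw [add_moveRight_inl]
      exact PGame.add_le_add_right ((D_moveRight m' _).1.trans (D_mono (by omega))) star
    · intro j
      refine rightMoves_add_cases
        (P := fun j => ofLists [copies (m'+1) downG + PGame.star] [0] ⧏ (copies k downG + PGame.star).moveRight j)
        j (fun j0 => ?_) (fun u => ?_)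
      · rw [add_moveRight_inl]
        cases k with
        | zero => exact elim0R j0
        | succ k'' =>
          refine (lf_congr_right (add_congr_left (D_moveRight k'' j0))).mpr ?_
          refine lf_of_le_moveLeft (i := toLeftMovesAdd (Sum.inr default)) ?_
          rw [add_moveLeft_inr, star_moveLeft]
          refine (le_congr_right (PGame.Equiv.symm (add_zero_equiv _))).mp ?_
          exact (IH k'' (by omega) (m'+1)).1 (by omega)
      · rw [add_moveRight_inr, star_moveRight]
        refine (lf_congr_right (add_zero_equiv _)).mpr ?_
        cases k with
        | zero =>
          refine lf_of_moveRight_le (j := sIdxR _ _) ?_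
          rw [ofLists_sing_moveRight]
          exact le_rfl
        | succ k'' =>
          show _ ⧏ copies k'' downG + downG
          refine lf_of_le_moveLeft (i := toLeftMovesAdd (Sum.inr dlIdx)) ?_
          rw [add_moveLeft_inr, downG_moveLeft]
          exact ((IH k'' (by omega) (m'+1)).2.1) (by omega)
  -- Part 3 : V-Go
  · intro hk
    obtain ⟨m', rfl⟩ : ∃ m', m = m'+1 := ⟨m-1, by omega⟩
    rw [le_iff_forall_lf]
    constructor
    · intro i
      rw [ofLists_sing_moveLeft]
      refine lf_of_moveRight_le (j := dRIdx m') ?_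
      exact (D_moveRight m' _).1.trans (D_mono (by omega))
    · intro j
      cases k with
      | zero => exact elim0R j
      | succ k' =>
        refine (lf_congr_right (D_moveRight k' j)).mpr ?_
        cases k' with
        | zero =>
          refine lf_of_moveRight_le (j := sIdxR _ _) ?_
          rw [ofLists_sing_moveRight]
          exact le_rfl
        | succ k'' =>
          show _ ⧏ copies k'' downG + downG
          refine lf_of_le_moveLeft (i := toLeftMovesAdd (Sum.inr dlIdx)) ?_
          rw [add_moveLeft_inr, downG_moveLeft]
          exact ((IH k'' (by omega) (m'+1)).2.2.2) (by omega) (by omega)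
  -- Part 4 : U-Go
  · intro hm hk
    obtain ⟨m', rfl⟩ : ∃ m', m = m'+1 := ⟨m-1, by omega⟩
    rw [le_iff_forall_lf]
    constructor
    · intro i
      rw [ofLists_sing_moveLeft]
      rcases Nat.lt_or_ge k (m'+2) with hlt | hge
      · refine lf_of_le_moveLeft (i := toLeftMovesAdd (Sum.inr default)) ?_
        rw [add_moveLeft_inr, star_moveLeft]
        refine (le_congr_right (PGame.Equiv.symm (add_zero_equiv _))).mp ?_
        exact D_mono (by omega)
      · have hk2 : k = m' + 2 := by omega
        subst hk2
        refine lf_of_le_moveLeft (i := toLeftMovesAdd (Sum.inl (dLIdx (m'+1)))) ?_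
        rw [add_moveLeft_inl]
        refine (le_congr_right (add_congr_left (D_moveLeft (m'+1) _))).mpr ?_
        refine (le_congr_right add_assoc_equiv).mpr ?_
        refine (le_congr_right (add_congr_right starStar)).mpr ?_
        refine (le_congr_right (add_zero_equiv _)).mpr ?_
        exact le_rfl
    · intro j
      refine rightMoves_add_cases
        (P := fun j => ofLists [copies (m'+1) downG] [0] ⧏ (copies k downG + PGame.star).moveRight j)
        j (fun j0 => ?_) (fun u => ?_)
      · rw [add_moveRight_inl]
        cases k with
        | zero => exact elim0R j0
        | succ k'' =>
          refine (lf_congr_right (add_congr_left (D_moveRight k'' j0))).mpr ?_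
          rcases Nat.lt_or_ge k'' (m'+1) with hlt | hge
          · refine lf_of_le_moveLeft (i := toLeftMovesAdd (Sum.inr default)) ?_
            rw [add_moveLeft_inr, star_moveLeft]
            refine (le_congr_right (PGame.Equiv.symm (add_zero_equiv _))).mp ?_
            exact (IH k'' (by omega) (m'+1)).2.2.1 (by omega)
          · have hk2 : k'' = m' + 1 := by omega
            subst hk2
            refine lf_of_le_moveLeft (i := toLeftMovesAdd (Sum.inl (dLIdx m'))) ?_
            rw [add_moveLeft_inl]
            refine (le_congr_right (add_congr_left (D_moveLeft m' _))).mpr ?_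
            refine (le_congr_right add_assoc_equiv).mpr ?_
            refine (le_congr_right (add_congr_right starStar)).mpr ?_
            refine (le_congr_right (add_zero_equiv _)).mpr ?_
            exact (IH m' (by omega) (m'+1)).2.2.1 (by omega)
      · rw [add_moveRight_inr, star_moveRight]
        refine (lf_congr_right (add_zero_equiv _)).mpr ?_
        cases k with
        | zero =>
          refine lf_of_moveRight_le (j := sIdxR _ _) ?_
          rw [ofLists_sing_moveRight]
          exact le_rfl
        | succ k'' =>
          show _ ⧏ copies k'' downG + downG
          refine lf_of_le_moveLeft (i := toLeftMovesAdd (Sum.inr dlIdx)) ?_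
          rw [add_moveLeft_inr, downG_moveLeft]
          exact (IH k'' (by omega) (m'+1)).2.2.2 (by omega) (by omega)

lemma E1 (m : ℕ) : (copies (m+1) downG : PGame.{u}) ≤ ofLists [copies m downG + star] [0] := by
  rw [le_iff_forall_lf]
  constructor
  · intro i
    refine lf_of_le_moveLeft (i := sIdxL _ _) ?_
    rw [ofLists_sing_moveLeft]
    exact (D_moveLeft m i).1
  · intro j
    rw [ofLists_sing_moveRight]
    refine lf_of_moveRight_le (j := dRIdx m) ?_
    exact (D_moveRight m _).1.trans (D_neg m)

lemma E2 (m : ℕ) : (copies (m+1) downG : PGame.{u}) + star ≤ ofLists [copies m downG] [0] := by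
  rw [le_iff_forall_lf]
  constructor
  · intro i
    refine leftMoves_add_cases
      (P := fun i => (copies (m+1) downG + PGame.star).moveLeft i ⧏ ofLists [copies m downG] [0])
      i (fun i0 => ?_) (fun u => ?_)
    · rw [add_moveLeft_inl]
      refine lf_of_le_moveLeft (i := sIdxL _ _) ?_
      rw [ofLists_sing_moveLeft]
      refine (le_congr_left (PGame.Equiv.symm ?_)).mp le_rfl
      exact PGame.Equiv.trans (add_congr_left (D_moveLeft m i0))
        (PGame.Equiv.trans add_assoc_equiv
          (PGame.Equiv.trans (add_congr_right starStar) (add_zero_equiv _)))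
    · rw [add_moveLeft_inr, star_moveLeft]
      refine lf_of_le_moveLeft (i := sIdxL _ _) ?_
      rw [ofLists_sing_moveLeft]
      exact (add_zero_equiv _).1.trans (D_succ_le m)
  · intro j
    rw [ofLists_sing_moveRight]
    refine lf_of_moveRight_le (j := toRightMovesAdd (Sum.inr default)) ?_
    rw [add_moveRight_inr, star_moveRight]
    exact (add_zero_equiv _).1.trans (D_neg (m+1))

theorem stmt12 (n : ℕ) :
    (Odd n → 1 ≤ n → ofLists [copies (n - 1) downG + star] [0] ≈ copies n downG) ∧
    (Even n → 2 ≤ n → ofLists [copies (n - 1) downG] [0] ≈ copies n downG + star) := by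
  constructor
  · intro _ h1
    obtain ⟨m, rfl⟩ : ∃ m, n = m + 1 := ⟨n - 1, by omega⟩
    simp only [Nat.add_sub_cancel]
    exact ⟨(VU (m+1) m).1 le_rfl, E1 m⟩
  · intro heven h2
    obtain ⟨m, rfl⟩ : ∃ m, n = m + 1 := ⟨n - 1, by omega⟩
    simp only [Nat.add_sub_cancel]
    exact ⟨(VU (m+1) m).2.2.2 (by omega) le_rfl, E2 m⟩
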